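/- arXiv:2310.03864 — 5 statements merged into one kernel-verified Lean document; each statement's English description precedes it below -/
import Mathlib

section
/- Let κ be an uncountable cardinal. There exists a concentrated set in P(ω) of cardinality κ if and only if there exists a K-Lusin set in [ω]^ω of cardinality κ. -/
open Filter Set

/- The Cantor-space topology on `Set ℕ` (`P(ω)`), induced by identifying a set with its
characteristic function in `ℕ → Bool` (product topology, `Bool` discrete). -/
noncomputable instance cantorTopology : TopologicalSpace (Set ℕ) :=
  TopologicalSpace.induced
    (fun s : Set ℕ => fun n : ℕ => @decide (n ∈ s) (Classical.propDecidable _)) inferInstance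
def ConcentratedOn (X D : Set (Set ℕ)) : Prop :=
  ∀ U : Set (Set ℕ), IsOpen U → D ⊆ U → (X \ U).Countable

def Concentrated (X : Set (Set ℕ)) : Prop :=
  ¬ X.Countable ∧ ∃ D ⊆ X, D.Countable ∧ ConcentratedOn X D

def KLusin (X : Set (Set ℕ)) : Prop :=
  X ⊆ {s : Set ℕ | s.Infinite} ∧ ¬ X.Countable ∧
    ∀ K : Set (Set ℕ), K ⊆ {s : Set ℕ | s.Infinite} → IsCompact K → (X ∩ K).Countable

/-! ### Auxiliary development -/

noncomputable def echar : Set ℕ → (ℕ → Bool) :=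
  fun s : Set ℕ => fun n : ℕ => @decide (n ∈ s) (Classical.propDecidable _)

lemma echar_eq_iff {s t : Set ℕ} {n : ℕ} : echar s n = echar t n ↔ (n ∈ s ↔ n ∈ t) := by
  simp [echar, decide_eq_decide]

lemma isInducing_echar : Topology.IsInducing echar := ⟨rfl⟩

noncomputable def cantorEquiv : Set ℕ ≃ (ℕ → Bool) where
  toFun := echar
  invFun f := {n | f n = true}
  left_inv s := by ext n; simp [echar]
  right_inv f := by funext n; by_cases h : f n = true <;> simp [echar, h]

noncomputable def cantorHomeo : Set ℕ ≃ₜ (ℕ → Bool) :=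
  cantorEquiv.toHomeomorphOfIsInducing isInducing_echar

instance : CompactSpace (Set ℕ) := cantorHomeo.symm.compactSpace
instance : T2Space (Set ℕ) := cantorHomeo.isEmbedding.t2Space

lemma finites_countable : {s : Set ℕ | s.Finite}.Countable := by
  refine (Set.countable_setOf_finite_subset (Set.countable_univ (α := ℕ))).mono ?_
  intro s hs; exact ⟨hs, Set.subset_univ _⟩

/-- `s` and `t` agree below `n`. -/
def agrees (s t : Set ℕ) (n : ℕ) : Prop := ∀ m < n, (m ∈ s ↔ m ∈ t)

lemma agrees_refl (s : Set ℕ) (n : ℕ) : agrees s s n := fun _ _ => Iff.rfl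

lemma agrees_symm {s t : Set ℕ} {n : ℕ} (h : agrees s t n) : agrees t s n :=
  fun m hm => (h m hm).symm

lemma agrees_mono {s t : Set ℕ} {n m : ℕ} (h : agrees s t n) (hm : m ≤ n) : agrees s t m :=
  fun x hx => h x (lt_of_lt_of_le hx hm)

lemma agrees_trans {s t u : Set ℕ} {n : ℕ} (h : agrees s t n) (h' : agrees t u n) :
    agrees s u n := fun m hm => (h m hm).trans (h' m hm)

noncomputable def trunc (s : Set ℕ) (n : ℕ) : Finset ℕ :=
  @Finset.filter _ (fun m => m ∈ s) (Classical.decPred _) (Finset.range n)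

lemma trunc_eq_of_agrees {s t : Set ℕ} {n : ℕ} (h : agrees s t n) : trunc s n = trunc t n := by
  classical
  ext m
  simp only [trunc, Finset.mem_filter, Finset.mem_range]
  exact and_congr_right fun hm => h m hm

lemma agrees_of_trunc_eq {s t : Set ℕ} {n : ℕ} (h : trunc s n = trunc t n) : agrees s t n := by
  classical
  intro m hm
  have := Finset.ext_iff.mp h m
  simpa [trunc, Finset.mem_filter, Finset.mem_range, hm] using this

/-- `n` is the least number `≥ k` such that `s` disagrees with each of `q 0, …, q k`
below `n`. -/
def lev (q : ℕ → Set ℕ) (s : Set ℕ) (k n : ℕ) : Prop :=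
  k ≤ n ∧ (∀ i ≤ k, ¬ agrees s (q i) n) ∧ ∀ m, k ≤ m → m < n → ∃ i ≤ k, agrees s (q i) m

lemma lev_exists {q : ℕ → Set ℕ} {s : Set ℕ} {k : ℕ} (h : ∀ i ≤ k, s ≠ q i) :
    ∃ n, lev q s k n := by
  classical
  have hw : ∀ i ≤ k, ∃ d, ¬ (d ∈ s ↔ d ∈ q i) := by
    intro i hi
    by_contra hc
    push_neg at hc
    exact h i hi (Set.ext hc)
  set d : ℕ → ℕ := fun i => if hd : ∃ x, ¬ (x ∈ s ↔ x ∈ q i) then hd.choose else 0 with hd_def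
  set N : ℕ := max k (((Finset.range (k + 1)).sup d) + 1) with hN
  have hP : k ≤ N ∧ ∀ i ≤ k, ¬ agrees s (q i) N := by
    refine ⟨le_max_left _ _, fun i hi hA => ?_⟩
    have hex := hw i hi
    have hdi : ¬ (d i ∈ s ↔ d i ∈ q i) := by
      simp only [hd_def, dif_pos hex]
      exact hex.choose_spec
    have hlt : d i < N := by
      have : d i ≤ (Finset.range (k + 1)).sup d :=
        Finset.le_sup (Finset.mem_range.mpr (Nat.lt_succ_of_le hi))
      exact lt_of_lt_of_le (Nat.lt_succ_of_le this) (le_max_right _ _)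
    exact hdi (hA (d i) hlt)
  have hEx : ∃ n, k ≤ n ∧ ∀ i ≤ k, ¬ agrees s (q i) n := ⟨N, hP⟩
  refine ⟨Nat.find hEx, (Nat.find_spec hEx).1, (Nat.find_spec hEx).2, ?_⟩
  intro m hkm hmn
  have := Nat.find_min hEx hmn
  push_neg at this
  obtain ⟨i, hi, hag⟩ := this hkm
  exact ⟨i, hi, hag⟩

lemma lev_unique {q : ℕ → Set ℕ} {s : Set ℕ} {k n n' : ℕ} (h : lev q s k n)
    (h' : lev q s k n') : n = n' := by
  rcases lt_trichotomy n n' with hlt | he | hlt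
  · obtain ⟨i, hi, hag⟩ := h'.2.2 n h.1 hlt
    exact absurd hag (h.2.1 i hi)
  · exact he
  · obtain ⟨i, hi, hag⟩ := h.2.2 n' h'.1 hlt
    exact absurd hag (h'.2.1 i hi)

/-- The continuous map carrying the countable set `range q` into the finite sets and
everything else injectively into the infinite sets. -/
noncomputable def gmap (q : ℕ → Set ℕ) (s : Set ℕ) : Set ℕ :=
  { c | ∃ k n, lev q s k n ∧ c = Nat.pair k (Nat.pair n (Encodable.encode (trunc s n))) }

lemma gmap_finite {q : ℕ → Set ℕ} {s : Set ℕ} {j : ℕ} (hs : s = q j) :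
    (gmap q s).Finite := by
  have hk : ∀ c ∈ gmap q s, ∀ k n, lev q s k n →
      c = Nat.pair k (Nat.pair n (Encodable.encode (trunc s n))) → k < j := by
    rintro c _ k n hlev rfl
    by_contra hkj
    push_neg at hkj
    exact hlev.2.1 j hkj (by rw [← hs]; exact agrees_refl s n)
  refine Set.Finite.of_finite_image (f := fun c => (Nat.unpair c).1) ?_ ?_
  · refine Set.Finite.subset (Set.finite_Iio j) ?_
    rintro x ⟨c, hc, rfl⟩
    obtain ⟨k, n, hlev, rfl⟩ := hc
    simp only [Nat.unpair_pair]
    exact hk _ ⟨k, n, hlev, rfl⟩ k n hlev rfl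
  · rintro c ⟨k, n, hlev, rfl⟩ c' ⟨k', n', hlev', rfl⟩ hcc
    simp only [Nat.unpair_pair] at hcc
    subst hcc
    rw [lev_unique hlev hlev']

lemma gmap_infinite {q : ℕ → Set ℕ} {s : Set ℕ} (hs : ∀ i, s ≠ q i) :
    (gmap q s).Infinite := by
  have h : ∀ k : ℕ, ∃ n, lev q s k n := fun k => lev_exists (fun i _ => hs i)
  choose nf hnf using h
  refine Set.infinite_of_injective_forall_mem
    (f := fun k => Nat.pair k (Nat.pair (nf k) (Encodable.encode (trunc s (nf k))))) ?_ ?_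
  · intro a b hab
    exact (Nat.pair_eq_pair.mp hab).1
  · intro k
    exact ⟨k, nf k, hnf k, rfl⟩

lemma gmap_injOn {q : ℕ → Set ℕ} : Set.InjOn (gmap q) {s | ∀ i, s ≠ q i} := by
  intro s hs t ht hst
  ext m
  obtain ⟨n, hn⟩ := lev_exists (k := m + 1) (fun i _ => hs i)
  have hc : Nat.pair (m + 1) (Nat.pair n (Encodable.encode (trunc s n))) ∈ gmap q t := by
    rw [← hst]; exact ⟨m + 1, n, hn, rfl⟩
  obtain ⟨k', n', hlev', hpair⟩ := hc
  obtain ⟨hk, hrest⟩ := Nat.pair_eq_pair.mp hpair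
  obtain ⟨hn', henc⟩ := Nat.pair_eq_pair.mp hrest
  subst hk; subst hn'
  have htr : trunc s n = trunc t n := Encodable.encode_injective henc
  have hag : agrees s t n := agrees_of_trunc_eq htr
  exact hag m (lt_of_lt_of_le (Nat.lt_succ_self m) hn.1)

lemma gmap_mem_invariant {q : ℕ → Set ℕ} {s t : Set ℕ} {c : ℕ}
    (h : agrees s t ((Nat.unpair (Nat.unpair c).2).1)) (hc : c ∈ gmap q s) : c ∈ gmap q t := by
  obtain ⟨k, n, hlev, rfl⟩ := hc
  have hn : (Nat.unpair (Nat.unpair (Nat.pair k (Nat.pair n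
      (Encodable.encode (trunc s n))))).2).1 = n := by
    simp [Nat.unpair_pair]
  rw [hn] at h
  have hlev' : lev q t k n := by
    refine ⟨hlev.1, ?_, ?_⟩
    · intro i hi hA
      exact hlev.2.1 i hi (agrees_trans h hA)
    · intro m hkm hmn
      obtain ⟨i, hi, hag⟩ := hlev.2.2 m hkm hmn
      exact ⟨i, hi, agrees_trans (agrees_symm (agrees_mono h (le_of_lt hmn))) hag⟩
  exact ⟨k, n, hlev', by rw [trunc_eq_of_agrees h]⟩

lemma isOpen_of_cylinder {n : ℕ} {A : Set (Set ℕ)}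
    (h : ∀ s t, agrees s t n → s ∈ A → t ∈ A) : IsOpen A := by
  rw [isOpen_induced_iff]
  refine ⟨(fun f : ℕ → Bool => fun i : Fin n => f i) ⁻¹'
    {v : Fin n → Bool | ∃ s ∈ A, ∀ i : Fin n, v i = echar s i}, ?_, ?_⟩
  · have hres : Continuous (fun f : ℕ → Bool => fun i : Fin n => f (i : ℕ)) :=
      continuous_pi fun i => continuous_apply (A := fun _ : ℕ => Bool) (i : ℕ)
    exact hres.isOpen_preimage _ (isOpen_discrete _)
  · ext s
    simp only [Set.mem_preimage, Set.mem_setOf_eq]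
    constructor
    · rintro ⟨s', hs', hvs⟩
      refine h s' s (fun m hm => ?_) hs'
      exact (echar_eq_iff.mp (hvs ⟨m, hm⟩)).symm
    · intro hs
      exact ⟨s, hs, fun i => rfl⟩

lemma continuous_gmap (q : ℕ → Set ℕ) : Continuous (gmap q) := by
  rw [show (cantorTopology : TopologicalSpace (Set ℕ)) =
    TopologicalSpace.induced echar inferInstance from rfl] at *
  refine continuous_induced_rng.mpr (continuous_pi fun c => ?_)
  refine continuous_discrete_rng.mpr fun b => ?_
  cases b
  · have : (fun a => (echar ∘ gmap q) a c) ⁻¹' {false} = {s | c ∈ gmap q s}ᶜ := by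
      ext s; simp [echar, Function.comp]
    rw [this]
    exact isOpen_of_cylinder (fun s t hag hs ht =>
      hs (gmap_mem_invariant (agrees_symm hag) ht))
  · have : (fun a => (echar ∘ gmap q) a c) ⁻¹' {true} = {s | c ∈ gmap q s} := by
      ext s; simp [echar, Function.comp]
    rw [this]
    exact isOpen_of_cylinder (fun s t hag hs => gmap_mem_invariant hag hs)

theorem concentrated_iff_kLusin (κ : Cardinal) (hκ : Cardinal.aleph0 < κ) :
    (∃ X : Set (Set ℕ), Concentrated X ∧ Cardinal.mk X = κ) ↔
      (∃ Y : Set (Set ℕ), KLusin Y ∧ Cardinal.mk Y = κ) := by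
  constructor
  · rintro ⟨X, ⟨hXc, D, hDX, hDc, hcon⟩, hXκ⟩
    -- enumerate Q := insert ∅ D
    obtain ⟨q, hq⟩ := (hDc.insert ∅).exists_eq_range (Set.insert_nonempty _ _)
    set Q : Set (Set ℕ) := insert ∅ D with hQ
    set X' : Set (Set ℕ) := X \ Q with hX'
    have hX'q : ∀ s ∈ X', ∀ i, s ≠ q i := by
      intro s hsX' i hsi
      exact hsX'.2 (by rw [hq]; exact ⟨i, hsi.symm⟩)
    refine ⟨gmap q '' X', ⟨?_, ?_, ?_⟩, ?_⟩
    · rintro y ⟨s, hs, rfl⟩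
      exact gmap_infinite (hX'q s hs)
    · -- not countable
      intro hcnt
      have h1 : Cardinal.mk (gmap q '' X' : Set (Set ℕ)) ≤ Cardinal.aleph0 :=
        Cardinal.le_aleph0_iff_set_countable.mpr hcnt
      have h2 : Cardinal.mk X' ≤ Cardinal.aleph0 := by
        rwa [← Cardinal.mk_image_eq_of_injOn (gmap q) X'
          (gmap_injOn.mono fun s hs i => hX'q s hs i)]
      have h3 : X'.Countable := Cardinal.le_aleph0_iff_set_countable.mp h2
      have : X.Countable := by
        have : X ⊆ X' ∪ (X ∩ Q) := by
          rw [hX', Set.diff_union_inter]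
        exact (h3.union ((hDc.insert ∅).mono Set.inter_subset_right)).mono this
      exact hXc this
    · -- K-Lusin property
      intro K hKinf hKcmp
      have hU : IsOpen Kᶜ := hKcmp.isClosed.isOpen_compl
      have hpre : IsOpen (gmap q ⁻¹' Kᶜ) := (continuous_gmap q).isOpen_preimage _ hU
      have hDsub : D ⊆ gmap q ⁻¹' Kᶜ := by
        intro d hd
        have hdQ : d ∈ Q := Set.mem_insert_of_mem _ hd
        rw [hq] at hdQ
        obtain ⟨j, hj⟩ := hdQ
        have hfin : (gmap q d).Finite := gmap_finite hj.symm
        intro hdK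
        exact (hKinf hdK) hfin
      have hcnt : (X \ (gmap q ⁻¹' Kᶜ)).Countable := hcon _ hpre hDsub
      refine (hcnt.image (gmap q)).mono ?_
      rintro y ⟨⟨s, hs, rfl⟩, hyK⟩
      exact ⟨s, ⟨hs.1, fun hsK => hsK hyK⟩, rfl⟩
    · -- cardinality
      rw [Cardinal.mk_image_eq_of_injOn (gmap q) X'
        (gmap_injOn.mono fun s hs i => hX'q s hs i)]
      have hXQ : Cardinal.mk (X ∩ Q : Set (Set ℕ)) ≤ Cardinal.aleph0 :=
        Cardinal.le_aleph0_iff_set_countable.mpr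
          ((hDc.insert ∅).mono Set.inter_subset_right)
      have hle : Cardinal.mk X' ≤ κ := by
        rw [← hXκ]; exact Cardinal.mk_le_mk_of_subset Set.diff_subset
      rcases eq_or_lt_of_le hle with he | hlt
      · exact he
      · exfalso
        have h1 : Cardinal.mk X ≤ Cardinal.mk X' + Cardinal.mk (X ∩ Q : Set (Set ℕ)) := by
          calc Cardinal.mk X ≤ Cardinal.mk ((X' ∪ (X ∩ Q)) : Set (Set ℕ)) :=
                Cardinal.mk_le_mk_of_subset (by rw [hX', Set.diff_union_inter])
            _ ≤ _ := Cardinal.mk_union_le _ _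
        have h2 : Cardinal.mk X' + Cardinal.mk (X ∩ Q : Set (Set ℕ)) < κ :=
          Cardinal.add_lt_of_lt hκ.le hlt (lt_of_le_of_lt hXQ hκ)
        rw [hXκ] at h1
        exact absurd (lt_of_le_of_lt h1 h2) (lt_irrefl κ)
  · rintro ⟨Y, ⟨hYinf, hYc, hYK⟩, hYκ⟩
    set F : Set (Set ℕ) := {s : Set ℕ | s.Finite} with hF
    refine ⟨Y ∪ F, ⟨?_, F, Set.subset_union_right, finites_countable, ?_⟩, ?_⟩
    · intro hcnt
      exact hYc (hcnt.mono Set.subset_union_left)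
    · intro U hU hFU
      have hKcmp : IsCompact Uᶜ := hU.isClosed_compl.isCompact
      have hKinf : Uᶜ ⊆ {s : Set ℕ | s.Infinite} := by
        intro s hsU
        by_contra hsi
        exact hsU (hFU (Set.not_infinite.mp hsi))
      have := hYK Uᶜ hKinf hKcmp
      refine this.mono ?_
      rintro s ⟨hsYF, hsU⟩
      rcases hsYF with hsY | hsF
      · exact ⟨hsY, hsU⟩
      · exact absurd (hFU hsF) hsU
    · refine le_antisymm ?_ ?_
      · calc Cardinal.mk (Y ∪ F : Set (Set ℕ)) ≤ Cardinal.mk Y + Cardinal.mk F :=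
              Cardinal.mk_union_le _ _
          _ ≤ κ + Cardinal.aleph0 := by
              rw [hYκ]
              exact add_le_add le_rfl (Cardinal.le_aleph0_iff_set_countable.mpr finites_countable)
          _ = κ := Cardinal.add_eq_left hκ.le hκ.le
      · rw [← hYκ]
        exact Cardinal.mk_le_mk_of_subset Set.subset_union_left
end

section
/- Let a ∈ ℕ^ℕ be strictly increasing and let v, s ⊆ ℕ be infinite with increasing enumerations e_v and e_s respectively. If v ⊆ s/a, then e_s(i) < a(e_v(i)+1) for every i ∈ ℕ. -/
open Filter Set

theorem enum_lt_of_subset_quotient (a : ℕ → ℕ) (ha : StrictMono a) (v s : Set ℕ)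
    (hv : v.Infinite) (hs : s.Infinite)
    (hsub : v ⊆ {n : ℕ | (s ∩ Set.Ico (a n) (a (n + 1))).Nonempty}) :
    ∀ i : ℕ, Nat.nth (· ∈ s) i < a (Nat.nth (· ∈ v) i + 1) := by
  intro i
  have hmem : ∀ j, Nat.nth (· ∈ v) j ∈ v := fun j => Nat.nth_mem_of_infinite hv j
  choose f hf using fun j => hsub (hmem j)
  have hfs : ∀ j, f j ∈ s := fun j => (hf j).1
  have hfl : ∀ j, a (Nat.nth (· ∈ v) j) ≤ f j := fun j => (hf j).2.1
  have hfu : ∀ j, f j < a (Nat.nth (· ∈ v) j + 1) := fun j => (hf j).2.2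
  classical
  apply Nat.nth_lt_of_lt_count
  rw [Nat.count_eq_card_filter_range]
  have hcard : (Finset.range (i + 1)).card ≤
      (Finset.filter (fun x => x ∈ s) (Finset.range (a (Nat.nth (· ∈ v) i + 1)))).card := by
    apply Finset.card_le_card_of_injOn f
    · intro j hj
      simp only [Finset.mem_coe, Finset.mem_range, Nat.lt_succ_iff] at hj
      simp only [Finset.mem_coe, Finset.mem_filter, Finset.mem_range]
      refine ⟨lt_of_lt_of_le (hfu j) (ha.monotone (by
        have := (Nat.nth_le_nth hv (p := (· ∈ v))).2 hj
        omega)), hfs j⟩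
    · have key : ∀ j k : ℕ, j < k → f j ≠ f k := by
        intro j k hlt
        have h1 : Nat.nth (· ∈ v) j < Nat.nth (· ∈ v) k := (Nat.nth_lt_nth hv).2 hlt
        have h2 : f j < a (Nat.nth (· ∈ v) j + 1) := hfu j
        have h3 : a (Nat.nth (· ∈ v) j + 1) ≤ a (Nat.nth (· ∈ v) k) := ha.monotone (by omega)
        have h4 : a (Nat.nth (· ∈ v) k) ≤ f k := hfl k
        omega
      intro j _ k _ heq
      rcases lt_trichotomy j k with h | h | h
      · exact absurd heq (key j k h)
      · exact h
      · exact absurd heq.symm (key k j h)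
  simpa using lt_of_lt_of_le (Nat.lt_succ_self i) (by simpa using hcard)
end

section
/- Let X ⊆ [ω]^ω be such that X ∪ Fin is a γ-set, and let a ∈ ℕ^ℕ be strictly increasing. Then there exists y ∈ [ω]^ω such that no x ∈ X satisfies x/a ⊆* y (where b ⊆* y means b ∖ y is finite). -/
open Filter Set

def IsOmegaCover {α : Type*} [TopologicalSpace α] (𝒰 : Set (Set α)) (X : Set α) : Prop :=
  (∀ V ∈ 𝒰, IsOpen V) ∧ X ∉ 𝒰 ∧ ∀ F : Set α, F ⊆ X → F.Finite → ∃ V ∈ 𝒰, F ⊆ V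

def IsGammaCover {α : Type*} (𝒰 : Set (Set α)) (X : Set α) : Prop :=
  𝒰.Infinite ∧ ∀ x ∈ X, {V ∈ 𝒰 | x ∉ V}.Finite

def GammaSet {α : Type*} [TopologicalSpace α] (X : Set α) : Prop :=
  ∀ 𝒰 : Set (Set α), IsOmegaCover 𝒰 X → ∃ 𝒱 ⊆ 𝒰, IsGammaCover 𝒱 X

namespace GNP

set_option linter.unusedSectionVars false



lemma isOpen_mem_pt (p : ℕ) : IsOpen {t : Set ℕ | p ∈ t} := by
  have h : {t : Set ℕ | p ∈ t}
      = (fun s : Set ℕ => fun n : ℕ => @decide (n ∈ s) (Classical.propDecidable _)) ⁻¹'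
        ((fun g : ℕ → Bool => g p) ⁻¹' {true}) := by
    ext t; simp
  rw [h]
  exact isOpen_induced ((continuous_apply p).isOpen_preimage _ (isOpen_discrete _))

lemma isOpen_not_mem_pt (p : ℕ) : IsOpen {t : Set ℕ | p ∉ t} := by
  have h : {t : Set ℕ | p ∉ t}
      = (fun s : Set ℕ => fun n : ℕ => @decide (n ∈ s) (Classical.propDecidable _)) ⁻¹'
        ((fun g : ℕ → Bool => g p) ⁻¹' {false}) := by
    ext t; simp
  rw [h]
  exact isOpen_induced ((continuous_apply p).isOpen_preimage _ (isOpen_discrete _))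

variable (a : ℕ → ℕ)

/-- The basic member of our ω-cover. -/
def UU (m n : ℕ) (C : Finset ℕ) : Set (Set ℕ) :=
  {t | t ∩ Set.Ico (a m) (a n) = ∅ ∨ ∃ j ∈ C, (t ∩ Set.Ico (a j) (a (j + 1))).Nonempty}

def fam : Set (Set (Set ℕ)) :=
  {V | ∃ m n C, V = UU a m n C ∧ C ⊆ Finset.Ico m n ∧ C.card ≤ m ∧ 2 * m + 2 ≤ n}

lemma isOpen_UU (m n : ℕ) (C : Finset ℕ) : IsOpen (UU a m n C) := by
  have h1 : {t : Set ℕ | t ∩ Set.Ico (a m) (a n) = ∅}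
      = ⋂ p ∈ Set.Ico (a m) (a n), {t : Set ℕ | p ∉ t} := by
    ext t
    simp only [Set.mem_setOf_eq, Set.eq_empty_iff_forall_notMem, Set.mem_inter_iff,
      Set.mem_Ico, Set.mem_iInter]
    constructor
    · intro h p hp hpt
      exact h p ⟨hpt, hp⟩
    · rintro h p ⟨hpt, hp⟩
      exact h p hp hpt
  have h2 : {t : Set ℕ | ∃ j ∈ C, (t ∩ Set.Ico (a j) (a (j + 1))).Nonempty}
      = ⋃ j ∈ C, ⋃ p ∈ Set.Ico (a j) (a (j + 1)), {t : Set ℕ | p ∈ t} := by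
    ext t
    simp [Set.Nonempty]
    tauto
  have : UU a m n C = {t : Set ℕ | t ∩ Set.Ico (a m) (a n) = ∅}
      ∪ {t : Set ℕ | ∃ j ∈ C, (t ∩ Set.Ico (a j) (a (j + 1))).Nonempty} := rfl
  rw [this, h1, h2]
  refine IsOpen.union ?_ ?_
  · exact (Set.finite_Ico _ _).isOpen_biInter (fun p _ => isOpen_not_mem_pt p)
  · exact isOpen_biUnion fun j _ => isOpen_biUnion fun p _ => isOpen_mem_pt p

variable {a} (ha : StrictMono a)
include ha

/-- a point `a j0` lies in interval `j` iff `j = j0`. -/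
lemma singleton_hit {j0 j : ℕ} :
    (({(a j0 : ℕ)} : Set ℕ) ∩ Set.Ico (a j) (a (j + 1))).Nonempty ↔ j = j0 := by
  constructor
  · rintro ⟨p, hp1, hp2⟩
    rcases hp1 with rfl
    rcases hp2 with ⟨h1, h2⟩
    have h1' : j ≤ j0 := by exact_mod_cast (ha.le_iff_le).mp h1
    have h2' : j0 < j + 1 := (ha.lt_iff_lt).mp h2
    omega
  · rintro rfl
    exact ⟨a j, rfl, ⟨le_rfl, ha (by omega)⟩⟩

/-- locate a point `p ≥ a m` into an interval `[a j, a (j+1))` with `j ≥ m`. -/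
lemma locate {p m : ℕ} (hp : a m ≤ p) :
    ∃ j, m ≤ j ∧ a j ≤ p ∧ p < a (j + 1) := by
  classical
  have hex : ∃ j, p < a (j + 1) := ⟨p, by have : p + 1 ≤ a (p + 1) := ha.le_apply; omega⟩
  let j := Nat.find hex
  have hj2 : p < a (j + 1) := Nat.find_spec hex
  have hj1 : a j ≤ p := by
    rcases Nat.eq_zero_or_pos j with h0 | h0
    · rw [h0]
      calc a 0 ≤ a m := ha.monotone (Nat.zero_le m)
        _ ≤ p := hp
    · have hlt : j - 1 < j := by omega
      have := Nat.find_min hex hlt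
      have heq : j - 1 + 1 = j := by omega
      rw [heq] at this
      omega
  have hjm : m ≤ j := by
    by_contra h
    have : j + 1 ≤ m := by omega
    have := ha.monotone this
    omega
  exact ⟨j, hjm, hj1, hj2⟩

/-- infinite sets hit infinitely many intervals. -/
lemma hitSet_infinite {x : Set ℕ} (hx : x.Infinite) :
    {n : ℕ | (x ∩ Set.Ico (a n) (a (n + 1))).Nonempty}.Infinite := by
  intro hfin
  apply hx
  have hsub : x ⊆ Set.Iio (a 0) ∪
      ⋃ j ∈ {n : ℕ | (x ∩ Set.Ico (a n) (a (n + 1))).Nonempty}, Set.Ico (a j) (a (j + 1)) := by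
    intro p hp
    by_cases h0 : p < a 0
    · exact Or.inl h0
    · push_neg at h0
      obtain ⟨j, _, hj1, hj2⟩ := locate ha h0
      exact Or.inr (Set.mem_biUnion ⟨p, hp, hj1, hj2⟩ ⟨hj1, hj2⟩)
  exact (Set.Finite.union (Set.finite_Iio _)
    (hfin.biUnion fun j _ => Set.finite_Ico _ _)).subset hsub



lemma exists_not_mem {m n : ℕ} {C : Finset ℕ} (hcard : C.card ≤ m) (hn : 2 * m + 2 ≤ n) :
    ∃ j0 ∈ Finset.Ico m n, j0 ∉ C := by
  by_contra h
  push_neg at h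
  have hsub : Finset.Ico m n ⊆ C := fun j hj => h j hj
  have := Finset.card_le_card hsub
  rw [Nat.card_Ico] at this
  omega

lemma omegaCover (X : Set (Set ℕ)) :
    IsOmegaCover (fam a) (X ∪ {s : Set ℕ | s.Finite}) := by
  classical
  refine ⟨?_, ?_, ?_⟩
  · rintro V ⟨m, n, C, rfl, -, -, -⟩
    exact isOpen_UU a m n C
  · rintro ⟨m, n, C, hEq, hsub, hcard, hn⟩
    obtain ⟨j0, hj0, hj0C⟩ := exists_not_mem ha hcard hn
    rw [Finset.mem_Ico] at hj0
    have hmem : ({(a j0 : ℕ)} : Set ℕ) ∈ X ∪ {s : Set ℕ | s.Finite} :=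
      Or.inr (Set.finite_singleton _)
    rw [hEq] at hmem
    rcases hmem with hL | ⟨j, hjC, hne⟩
    · have : (a j0 : ℕ) ∈ ({(a j0 : ℕ)} : Set ℕ) ∩ Set.Ico (a m) (a n) :=
        ⟨rfl, ha.monotone hj0.1, ha hj0.2⟩
      rw [hL] at this
      exact this
    · rw [singleton_hit ha] at hne
      subst hne
      exact hj0C hjC
  · intro F hFX hFfin
    set m := hFfin.toFinset.card with hm
    set P : Set ℕ → Prop := fun t => ∃ j, m ≤ j ∧ (t ∩ Set.Ico (a j) (a (j + 1))).Nonempty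
      with hP
    set pick : Set ℕ → ℕ := fun t => if h : P t then h.choose else m with hpick
    have hpickspec : ∀ t, P t → m ≤ pick t ∧ (t ∩ Set.Ico (a (pick t)) (a (pick t + 1))).Nonempty := by
      intro t ht
      simp only [hpick, dif_pos ht]
      exact ⟨ht.choose_spec.1, ht.choose_spec.2⟩
    set C : Finset ℕ := (hFfin.toFinset.filter P).image pick with hC
    have hCcard : C.card ≤ m := by
      calc C.card ≤ (hFfin.toFinset.filter P).card := Finset.card_image_le
        _ ≤ hFfin.toFinset.card := Finset.card_filter_le _ _
    set n : ℕ := 2 * m + 2 + C.sup (· + 1) with hn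
    have hCsub : C ⊆ Finset.Ico m n := by
      intro j hj
      rw [Finset.mem_Ico]
      constructor
      · obtain ⟨t, ht, rfl⟩ := Finset.mem_image.mp hj
        have hPt : P t := (Finset.mem_filter.mp ht).2
        exact (hpickspec t hPt).1
      · have : j + 1 ≤ C.sup (· + 1) := Finset.le_sup (f := (· + 1)) hj
        omega
    refine ⟨UU a m n C, ⟨m, n, C, rfl, hCsub, hCcard, by omega⟩, ?_⟩
    intro t htF
    by_cases h0 : t ∩ Set.Ico (a m) (a n) = ∅
    · exact Or.inl h0
    · right
      obtain ⟨p, hpt, hpm, _⟩ := Set.nonempty_iff_ne_empty.mpr h0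
      have hPt : P t := by
        obtain ⟨j, hjm, hj1, hj2⟩ := locate ha hpm
        exact ⟨j, hjm, ⟨p, hpt, hj1, hj2⟩⟩
      refine ⟨pick t, ?_, (hpickspec t hPt).2⟩
      exact Finset.mem_image.mpr ⟨t, Finset.mem_filter.mpr ⟨hFfin.mem_toFinset.mpr htF, hPt⟩, rfl⟩


omit ha in
theorem main (X : Set (Set ℕ)) (hX : ∀ x ∈ X, x.Infinite)
    (hγ : GammaSet (X ∪ {s : Set ℕ | s.Finite})) (ha : StrictMono a) :
    ∃ y : Set ℕ, y.Infinite ∧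
      ∀ x ∈ X, ¬ ({n : ℕ | (x ∩ Set.Ico (a n) (a (n + 1))).Nonempty} \ y).Finite := by
  classical
  obtain ⟨𝒱, h𝒱sub, h𝒱inf, h𝒱γ⟩ := hγ (fam a) (omegaCover ha X)
  -- choose data for each member of 𝒱
  have hdata : ∀ V, V ∈ 𝒱 → ∃ m n C, V = UU a m n C ∧ C ⊆ Finset.Ico m n ∧
      C.card ≤ m ∧ 2 * m + 2 ≤ n := fun V hV => h𝒱sub hV
  choose! mV nV CV hVeq hCsub hCcard hVn using hdata
  -- (★): for each j, only finitely many members of 𝒱 "omit" j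
  have hstar : ∀ j : ℕ, {V | V ∈ 𝒱 ∧ j ∈ Finset.Ico (mV V) (nV V) \ CV V}.Finite := by
    intro j
    refine (h𝒱γ ({(a j : ℕ)} : Set ℕ) (Or.inr (Set.finite_singleton _))).subset ?_
    rintro V ⟨hV, hj⟩
    rw [Finset.mem_sdiff, Finset.mem_Ico] at hj
    refine ⟨hV, ?_⟩
    rw [hVeq V hV]
    rintro (hL | ⟨j', hj'C, hne⟩)
    · have : (a j : ℕ) ∈ ({(a j : ℕ)} : Set ℕ) ∩ Set.Ico (a (mV V)) (a (nV V)) :=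
        ⟨rfl, ha.monotone hj.1.1, ha hj.1.2⟩
      rw [hL] at this
      exact this
    · rw [singleton_hit ha] at hne
      subst hne
      exact hj.2 hj'C
  -- only finitely many members have n-value ≤ N
  have hnfin : ∀ N : ℕ, {V | V ∈ 𝒱 ∧ nV V ≤ N}.Finite := by
    intro N
    have hsub : {V | V ∈ 𝒱 ∧ nV V ≤ N} ⊆
        (fun p : ℕ × ℕ × Finset ℕ => UU a p.1 p.2.1 p.2.2) ''
          ↑((Finset.range (N + 1)) ×ˢ (Finset.range (N + 1)) ×ˢ (Finset.range N).powerset) := by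
      rintro V ⟨hV, hn⟩
      have hmn : mV V < nV V := by have := hVn V hV; omega
      refine ⟨(mV V, nV V, CV V), ?_, (hVeq V hV).symm⟩
      simp only [Finset.coe_product, Set.mem_prod, Finset.mem_coe, Finset.mem_range,
        Finset.mem_powerset]
      refine ⟨by omega, by omega, ?_⟩
      intro j hj
      have := (hCsub V hV) hj
      rw [Finset.mem_Ico] at this
      rw [Finset.mem_range]
      omega
    exact (Set.Finite.image _ (Finset.finite_toSet _)).subset hsub
  -- m-values tend to infinity
  have hmfin : ∀ M : ℕ, {V | V ∈ 𝒱 ∧ mV V ≤ M}.Finite := by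
    intro M
    by_contra hinf'
    have hinf : {V | V ∈ 𝒱 ∧ mV V ≤ M}.Infinite := hinf'
    have hjunk : ({V | V ∈ 𝒱 ∧ nV V ≤ 2 * M + 2} ∪
        ⋃ j ∈ Finset.Ico M (2 * M + 2), {V | V ∈ 𝒱 ∧ j ∈ Finset.Ico (mV V) (nV V) \ CV V}).Finite :=
      (hnfin _).union (Set.Finite.biUnion (Finset.finite_toSet _) fun j _ => hstar j)
    obtain ⟨V, hVin, hVout⟩ := (hinf.diff hjunk).nonempty
    obtain ⟨hV, hVm⟩ := hVin
    rw [Set.mem_union] at hVout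
    push_neg at hVout
    obtain ⟨hV1, hV2⟩ := hVout
    have hVn' : 2 * M + 2 < nV V := by
      by_contra h
      exact hV1 ⟨hV, by omega⟩
    have hCsup : Finset.Ico M (2 * M + 2) ⊆ CV V := by
      intro j hj
      rw [Finset.mem_Ico] at hj
      have : V ∉ {V | V ∈ 𝒱 ∧ j ∈ Finset.Ico (mV V) (nV V) \ CV V} := by
        intro hmem
        exact hV2 (Set.mem_biUnion (Finset.mem_coe.mpr (Finset.mem_Ico.mpr hj)) hmem)
      by_contra hjC
      exact this ⟨hV, Finset.mem_sdiff.mpr ⟨Finset.mem_Ico.mpr ⟨by omega, by omega⟩, hjC⟩⟩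
    have := Finset.card_le_card hCsup
    rw [Nat.card_Ico] at this
    have := hCcard V hV
    omega
  -- greedy subsequence with stacked windows
  have hpickstep : ∀ N : ℕ, ∃ V, V ∈ 𝒱 ∧ N < mV V := by
    intro N
    obtain ⟨V, hV1, hV2⟩ := (h𝒱inf.diff (hmfin N)).nonempty
    exact ⟨V, hV1, by simpa [hV1] using hV2⟩
  let f : ℕ → Set (Set ℕ) := fun k =>
    Nat.rec (hpickstep 0).choose (fun _ prev => (hpickstep (nV prev)).choose) k
  have hf0 : f 0 ∈ 𝒱 ∧ 0 < mV (f 0) := (hpickstep 0).choose_spec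
  have hfs : ∀ k, f (k + 1) ∈ 𝒱 ∧ nV (f k) < mV (f (k + 1)) := fun k =>
    (hpickstep (nV (f k))).choose_spec
  have hfmem : ∀ k, f k ∈ 𝒱 := by
    intro k
    cases k with
    | zero => exact hf0.1
    | succ k => exact (hfs k).1
  have hmlt : ∀ k, mV (f k) < nV (f k) := by
    intro k
    have := hVn (f k) (hfmem k)
    omega
  have hmono : StrictMono fun k => mV (f k) :=
    strictMono_nat_of_lt_succ fun k => lt_trans (hmlt k) (hfs k).2
  have hinj : Function.Injective f := by
    intro k k' h
    by_contra hne
    have := hmono.injective (congrArg mV h)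
    exact hne this
  -- windows [m,n) of distinct k's are disjoint
  have hwd : ∀ {k k' j : ℕ}, j ∈ Finset.Ico (mV (f k)) (nV (f k)) →
      j ∈ Finset.Ico (mV (f k')) (nV (f k')) → k = k' := by
    have hle : ∀ {k k'}, k < k' → nV (f k) ≤ mV (f k') := by
      intro k k' hkk
      induction k' with
      | zero => omega
      | succ k'' ih =>
        rcases Nat.lt_succ_iff_lt_or_eq.mp hkk with h | h
        · exact le_trans (ih h) (le_trans (hmlt k'').le (hfs k'').2.le)
        · subst h; exact (hfs k).2.le
    intro k k' j hj hj'
    rw [Finset.mem_Ico] at hj hj'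
    rcases lt_trichotomy k k' with h | h | h
    · have := hle h; omega
    · exact h
    · have := hle h; omega
  -- the sets D k and the final y
  set D : ℕ → Finset ℕ := fun k => Finset.Ico (mV (f k)) (nV (f k)) \ CV (f k) with hD
  have hDne : ∀ k, ∃ j ∈ D k, True := by
    intro k
    obtain ⟨j, hj1, hj2⟩ := exists_not_mem ha (hCcard (f k) (hfmem k)) (hVn (f k) (hfmem k))
    exact ⟨j, Finset.mem_sdiff.mpr ⟨hj1, hj2⟩, trivial⟩
  set y : Set ℕ := ⋃ k, (↑(D k) : Set ℕ) with hy
  have hymem : ∀ {j}, j ∈ y → ∃ k, j ∈ D k := by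
    intro j hj
    obtain ⟨s, ⟨k, rfl⟩, hjs⟩ := hj
    exact ⟨k, hjs⟩
  refine ⟨y, ?_, ?_⟩
  · -- y is infinite
    set d : ℕ → ℕ := fun k => (hDne k).choose with hd
    have hdspec : ∀ k, d k ∈ D k := fun k => (hDne k).choose_spec.1
    have hdmono : StrictMono d := by
      apply strictMono_nat_of_lt_succ
      intro k
      have h1 := Finset.mem_sdiff.mp (hdspec k)
      have h2 := Finset.mem_sdiff.mp (hdspec (k + 1))
      rw [Finset.mem_Ico] at h1 h2
      have := (hfs k).2
      omega
    apply Set.infinite_of_injective_forall_mem (f := d) hdmono.injective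
    intro k
    exact Set.mem_iUnion.mpr ⟨k, hdspec k⟩
  · -- main property
    intro x hx hfin
    set hs : Set ℕ := {n : ℕ | (x ∩ Set.Ico (a n) (a (n + 1))).Nonempty} with hhs
    have hsinf : hs.Infinite := hitSet_infinite ha (hX x hx)
    have hyinf : (hs ∩ y).Infinite := by
      intro hfin2
      exact hsinf ((hfin.union hfin2).subset fun j hj => by
        by_cases h : j ∈ y
        · exact Or.inr ⟨hj, h⟩
        · exact Or.inl ⟨hj, h⟩)
    -- x is in all but finitely many f k
    have hbad : {k | x ∉ f k}.Finite := by
      have h1 : {k | x ∉ f k} ⊆ f ⁻¹' {V ∈ 𝒱 | x ∉ V} := by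
        intro k hk
        exact ⟨hfmem k, hk⟩
      exact ((h𝒱γ x (Or.inl hx)).preimage hinj.injOn).subset h1
    obtain ⟨B, hB⟩ := hbad.bddAbove
    obtain ⟨r, hr⟩ := hfin.bddAbove
    set K0 : ℕ := B + r + 1 with hK0
    have hjunkfin : (⋃ k ∈ Finset.range (K0 + 1), (↑(D k) : Set ℕ)).Finite :=
      Set.Finite.biUnion (Finset.finite_toSet _) fun k _ => (D k).finite_toSet
    obtain ⟨j, hjmem, hjnot⟩ := ((hyinf).diff hjunkfin).nonempty
    obtain ⟨hjhs, hjy⟩ := hjmem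
    obtain ⟨k, hjk⟩ := hymem hjy
    have hkK0 : K0 + 1 ≤ k := by
      by_contra h
      exact hjnot (Set.mem_biUnion (Finset.mem_coe.mpr (Finset.mem_range.mpr (by omega))) hjk)
    have hkB : x ∈ f k := by
      by_contra h
      have := hB (show k ∈ {k | x ∉ f k} from h)
      omega
    have hmk : r < mV (f k) := by
      have : k ≤ mV (f k) := hmono.le_apply
      omega
    -- use membership of x in f k
    rw [hVeq (f k) (hfmem k)] at hkB
    rcases hkB with hL | ⟨j', hj'C, hne⟩
    · -- impossible: x hits interval j inside the window
      have hjw := Finset.mem_sdiff.mp hjk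
      rw [Finset.mem_Ico] at hjw
      obtain ⟨p, hpx, hp1, hp2⟩ := hjhs
      have : p ∈ x ∩ Set.Ico (a (mV (f k))) (a (nV (f k))) :=
        ⟨hpx, le_trans (ha.monotone hjw.1.1) hp1, lt_of_lt_of_le hp2 (ha.monotone hjw.1.2)⟩
      rw [hL] at this
      exact this
    · -- the certificate j' gives a contradiction
      have hj'w : j' ∈ Finset.Ico (mV (f k)) (nV (f k)) := hCsub (f k) (hfmem k) hj'C
      have hj'hs : j' ∈ hs := hne
      have hj'r : r < j' := by
        rw [Finset.mem_Ico] at hj'w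
        omega
      have hj'y : j' ∈ y := by
        by_contra h
        have : j' ∈ hs \ y := ⟨hj'hs, h⟩
        have := hr this
        omega
      obtain ⟨k', hj'k'⟩ := hymem hj'y
      have hj'w' : j' ∈ Finset.Ico (mV (f k')) (nV (f k')) := (Finset.mem_sdiff.mp hj'k').1
      have : k = k' := hwd hj'w hj'w'
      subst this
      exact (Finset.mem_sdiff.mp hj'k').2 hj'C


end GNP

theorem gammaSet_no_pseudounion (X : Set (Set ℕ)) (hX : ∀ x ∈ X, x.Infinite)
    (hγ : GammaSet (X ∪ {s : Set ℕ | s.Finite})) (a : ℕ → ℕ) (ha : StrictMono a) :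
    ∃ y : Set ℕ, y.Infinite ∧
      ∀ x ∈ X, ¬ ({n : ℕ | (x ∩ Set.Ico (a n) (a (n + 1))).Nonempty} \ y).Finite :=
  GNP.main X hX hγ ha
end

section
/- Let X ⊆ P(ω) with Fin ⊆ X, and let A ⊆ ℕ^ℕ be a family such that every infinite x ∈ X has its increasing enumeration ≤* some a ∈ A. Then for every x ∈ X: x is finite if and only if for every a ∈ A and every n ∈ ℕ there is m ≥ n with x ∩ [m, a(m)+1) = ∅. In particular, Fin = X ∩ ⋂_{a∈A} ⋂_{n∈ℕ} ⋃_{m≥n} {x ∈ P(ω) : x ∩ [m, a(m)+1) = ∅}, where each set ⋃_{m≥n} {x : x ∩ [m, a(m)+1) = ∅} is open in P(ω). -/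
open Filter Set

theorem fin_GOmega1 (X : Set (Set ℕ)) (hFin : {s : Set ℕ | s.Finite} ⊆ X) (A : Set (ℕ → ℕ))
    (hA : ∀ x ∈ X, x.Infinite → ∃ a ∈ A, ∀ᶠ n in atTop, Nat.nth (· ∈ x) n ≤ a n) :
    (∀ x ∈ X, (x.Finite ↔ ∀ a ∈ A, ∀ n : ℕ, ∃ m ≥ n, x ∩ Set.Ico m (a m + 1) = ∅)) ∧
    ({s : Set ℕ | s.Finite} =
      X ∩ ⋂ a ∈ A, ⋂ n : ℕ, ⋃ m, ⋃ (_ : n ≤ m), {x : Set ℕ | x ∩ Set.Ico m (a m + 1) = ∅}) ∧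
    (∀ a ∈ A, ∀ n : ℕ,
      IsOpen (⋃ m, ⋃ (_ : n ≤ m), {x : Set ℕ | x ∩ Set.Ico m (a m + 1) = ∅})) := by
  have key : ∀ x ∈ X, (x.Finite ↔ ∀ a ∈ A, ∀ n : ℕ, ∃ m ≥ n, x ∩ Set.Ico m (a m + 1) = ∅) := by
    intro x hx
    constructor
    · intro hfin a _ n
      obtain ⟨b, hb⟩ := hfin.bddAbove
      refine ⟨max n (b + 1), le_max_left _ _, ?_⟩
      ext y
      simp only [Set.mem_inter_iff, Set.mem_Ico, Set.mem_empty_iff_false, iff_false]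
      rintro ⟨hyx, hy1, _⟩
      have := hb hyx
      have h2 := le_max_right n (b + 1)
      omega
    · intro h
      by_contra hinf
      have hinf : x.Infinite := hinf
      obtain ⟨a, haA, ha⟩ := hA x hx hinf
      obtain ⟨N, hN⟩ := eventually_atTop.mp ha
      obtain ⟨m, hm, hempty⟩ := h a haA N
      have hinf' : (setOf (· ∈ x)).Infinite := hinf
      have hmem : Nat.nth (· ∈ x) m ∈ x := Nat.nth_mem_of_infinite hinf' m
      have h1 : m ≤ Nat.nth (· ∈ x) m :=
        Nat.le_nth (fun hf => absurd hf hinf')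
      have h2 : Nat.nth (· ∈ x) m ≤ a m := hN m hm
      have hmm : Nat.nth (· ∈ x) m ∈ x ∩ Set.Ico m (a m + 1) := ⟨hmem, h1, by omega⟩
      rw [hempty] at hmm
      exact hmm
  refine ⟨key, ?_, ?_⟩
  · ext s
    simp only [Set.mem_setOf_eq, Set.mem_inter_iff, Set.mem_iInter, Set.mem_iUnion,
      Set.mem_setOf_eq]
    constructor
    · intro hs
      refine ⟨hFin hs, fun a ha n => ?_⟩
      obtain ⟨m, hm, he⟩ := (key s (hFin hs)).mp hs a ha n
      exact ⟨m, hm, he⟩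
    · rintro ⟨hsX, h⟩
      refine (key s hsX).mpr (fun a ha n => ?_)
      obtain ⟨m, hm, he⟩ := h a ha n
      exact ⟨m, hm, he⟩
  · intro a _ n
    refine isOpen_iUnion fun m => isOpen_iUnion fun _ => ?_
    have heq : {x : Set ℕ | x ∩ Set.Ico m (a m + 1) = ∅} =
        (fun s : Set ℕ => fun n : ℕ => @decide (n ∈ s) (Classical.propDecidable _)) ⁻¹'
          (⋂ i ∈ Finset.Ico m (a m + 1), {f : ℕ → Bool | f i = false}) := by
      ext x
      simp only [Set.mem_setOf_eq, Set.mem_preimage, Set.mem_iInter, Finset.mem_Ico]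
      constructor
      · intro h i hi
        refine @decide_eq_false (i ∈ x) (Classical.propDecidable _) fun hix => ?_
        have : i ∈ x ∩ Set.Ico m (a m + 1) := ⟨hix, hi.1, hi.2⟩
        rw [h] at this
        exact this
      · intro h
        ext i
        simp only [Set.mem_inter_iff, Set.mem_Ico, Set.mem_empty_iff_false, iff_false]
        rintro ⟨hix, h1, h2⟩
        exact @of_decide_eq_false (i ∈ x) (Classical.propDecidable _) (h i ⟨h1, h2⟩) hix
    rw [heq]
    refine IsOpen.preimage continuous_induced_dom ?_
    refine isOpen_biInter_finset fun i _ => ?_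
    show IsOpen ((fun f : ℕ → Bool => f i) ⁻¹' {false})
    exact (continuous_apply (A := fun _ : ℕ => Bool) i).isOpen_preimage ({false} : Set Bool) (isOpen_discrete _)
end

section
/- The Cantor space is countable dense homogeneous: for any two countable dense subsets D₀ and D₁ of 2^ℕ, there exists a homeomorphism h : 2^ℕ → 2^ℕ with h[D₀] = D₁. -/
open Set

namespace CDH

/-- Restriction of a point of Cantor space to its first `ℓ` coordinates. -/
def res (ℓ : ℕ) (x : ℕ → Bool) : Fin ℓ → Bool := fun i => x i

/-- A stage of the back-and-forth construction: a length `len`, a permutation of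
the cylinders of length `len`, and a list of matched pairs of points. -/
structure St where
  len : ℕ
  perm : (Fin len → Bool) ≃ (Fin len → Bool)
  ps : List ((ℕ → Bool) × (ℕ → Bool))

variable (D₀ D₁ : Set (ℕ → Bool))

def Inv (S : St) : Prop :=
  (∀ q ∈ S.ps, q.1 ∈ D₀ ∧ q.2 ∈ D₁ ∧ S.perm (res S.len q.1) = res S.len q.2) ∧
  (∀ q ∈ S.ps, ∀ q' ∈ S.ps, res S.len q.1 = res S.len q'.1 → q = q')

def Compat (S T : St) : Prop :=
  ∃ h : S.len ≤ T.len, ∀ s : Fin T.len → Bool, ∀ i : Fin S.len,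
    T.perm s (Fin.castLE h i) = S.perm (fun j => s (Fin.castLE h j)) i

variable {D₀ D₁}

lemma compat_refl (S : St) : Compat S S := ⟨le_rfl, fun s i => rfl⟩

lemma compat_trans {S T U : St} (h1 : Compat S T) (h2 : Compat T U) : Compat S U := by
  obtain ⟨l1, h1⟩ := h1
  obtain ⟨l2, h2⟩ := h2
  refine ⟨l1.trans l2, fun s i => ?_⟩
  have : Fin.castLE (l1.trans l2) i = Fin.castLE l2 (Fin.castLE l1 i) := rfl
  rw [this, h2, h1]
  rfl

lemma bool_xor_cancel (a b : Bool) : Bool.xor (Bool.xor a b) b = a := by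
  cases a <;> cases b <;> rfl

/-- The matching bit used when splitting a cell. -/
noncomputable def cbit (S : St) (s : Fin S.len → Bool) : Bool :=
  if h : ∃ q, q ∈ S.ps ∧ res S.len q.1 = s then
    Bool.xor (h.choose.1 S.len) (h.choose.2 S.len)
  else false

/-- Split every cell into its two children, matching tracked pairs. -/
noncomputable def refine (S : St) : St where
  len := S.len + 1
  perm :=
    { toFun := fun s => Fin.snoc (S.perm (Fin.init s))
        (Bool.xor (s (Fin.last S.len)) (cbit S (Fin.init s)))
      invFun := fun t => Fin.snoc (S.perm.symm (Fin.init t))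
        (Bool.xor (t (Fin.last S.len)) (cbit S (S.perm.symm (Fin.init t))))
      left_inv := by
        intro s
        simp only [Fin.init_snoc, Fin.snoc_last, Equiv.symm_apply_apply, bool_xor_cancel]
        exact Fin.snoc_init_self s
      right_inv := by
        intro t
        simp only [Fin.init_snoc, Fin.snoc_last, Equiv.apply_symm_apply, bool_xor_cancel]
        exact Fin.snoc_init_self t }
  ps := S.ps

lemma refine_len (S : St) : (refine S).len = S.len + 1 := rfl
lemma refine_ps (S : St) : (refine S).ps = S.ps := rfl

lemma init_eq_castLE {n : ℕ} (s : Fin (n+1) → Bool) :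
    Fin.init s = fun j : Fin n => s (Fin.castLE (Nat.le_succ n) j) := rfl

lemma refine_perm_apply (S : St) (s : Fin (S.len + 1) → Bool) :
    (refine S).perm s = Fin.snoc (S.perm (Fin.init s))
      (Bool.xor (s (Fin.last S.len)) (cbit S (Fin.init s))) := rfl

lemma compat_refine (S : St) : Compat S (refine S) := by
  refine ⟨Nat.le_succ _, fun s i => ?_⟩
  show Fin.snoc (α := fun _ => Bool) (S.perm (Fin.init s))
    (Bool.xor (s (Fin.last S.len)) (cbit S (Fin.init s))) (Fin.castLE (Nat.le_succ S.len) i) = _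
  have : Fin.castLE (Nat.le_succ S.len) i = Fin.castSucc i := rfl
  rw [this, Fin.snoc_castSucc]
  rfl

lemma res_succ_init (ℓ : ℕ) (x : ℕ → Bool) : Fin.init (res (ℓ+1) x) = res ℓ x := rfl

lemma res_succ_last (ℓ : ℕ) (x : ℕ → Bool) : res (ℓ+1) x (Fin.last ℓ) = x ℓ := rfl

lemma res_succ_eq (ℓ : ℕ) (x : ℕ → Bool) :
    res (ℓ+1) x = Fin.snoc (res ℓ x) (x ℓ) := by
  rw [← res_succ_init ℓ x, ← res_succ_last ℓ x]
  exact (Fin.snoc_init_self _).symm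

lemma cbit_eq (S : St) (hS : Inv D₀ D₁ S) {q : (ℕ → Bool) × (ℕ → Bool)} (hq : q ∈ S.ps) :
    cbit S (res S.len q.1) = Bool.xor (q.1 S.len) (q.2 S.len) := by
  have hex : ∃ q', q' ∈ S.ps ∧ res S.len q'.1 = res S.len q.1 := ⟨q, hq, rfl⟩
  rw [cbit, dif_pos hex]
  have := hS.2 _ hex.choose_spec.1 _ hq hex.choose_spec.2
  rw [this]

lemma inv_refine (S : St) (hS : Inv D₀ D₁ S) : Inv D₀ D₁ (refine S) := by
  constructor
  · intro q hq
    have h1 := hS.1 q hq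
    refine ⟨h1.1, h1.2.1, ?_⟩
    show Fin.snoc (S.perm (Fin.init (res (S.len+1) q.1)))
      (Bool.xor (res (S.len+1) q.1 (Fin.last S.len)) (cbit S (Fin.init (res (S.len+1) q.1))))
      = res (S.len+1) q.2
    rw [res_succ_init, res_succ_last, cbit_eq S hS hq, h1.2.2, res_succ_eq]
    congr 1
    rw [← Bool.xor_assoc, Bool.xor_self, Bool.false_xor]
  · intro q hq q' hq' h
    refine hS.2 q hq q' hq' ?_
    funext i
    have := congrFun h (Fin.castSucc i)
    exact this

/-- Iterated refinement. -/
noncomputable def refineN (S : St) : ℕ → St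
  | 0 => S
  | k+1 => refine (refineN S k)

lemma refineN_len (S : St) (k : ℕ) : (refineN S k).len = S.len + k := by
  induction k with
  | zero => rfl
  | succ k ih => show (refineN S k).len + 1 = _; omega

lemma refineN_ps (S : St) (k : ℕ) : (refineN S k).ps = S.ps := by
  induction k with
  | zero => rfl
  | succ k ih => exact ih

lemma inv_refineN (S : St) (hS : Inv D₀ D₁ S) (k : ℕ) : Inv D₀ D₁ (refineN S k) := by
  induction k with
  | zero => exact hS
  | succ k ih => exact inv_refine _ ih

lemma compat_refineN (S : St) (k : ℕ) : Compat S (refineN S k) := by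
  induction k with
  | zero => exact compat_refl S
  | succ k ih => exact compat_trans ih (compat_refine _)

/-- A nonempty cylinder meets any dense set. -/
lemma exists_mem_res {D : Set (ℕ → Bool)} (hD : Dense D) {ℓ : ℕ} (t : Fin ℓ → Bool) :
    ∃ y ∈ D, res ℓ y = t := by
  have hopen : IsOpen {y : ℕ → Bool | ∀ i : Fin ℓ, y (i : ℕ) = t i} := by
    have : {y : ℕ → Bool | ∀ i : Fin ℓ, y (i : ℕ) = t i}
        = ⋂ i : Fin ℓ, {y : ℕ → Bool | y (i : ℕ) = t i} := by
      ext y; simp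
    rw [this]
    refine isOpen_iInter_of_finite fun i => ?_
    have h2 : {y : ℕ → Bool | y (i : ℕ) = t i}
        = (fun y : ℕ → Bool => y (i : ℕ)) ⁻¹' {x | x = t i} := rfl
    rw [h2]
    exact (isOpen_discrete _).preimage (continuous_apply _)
  have hne : {y : ℕ → Bool | ∀ i : Fin ℓ, y (i : ℕ) = t i}.Nonempty := by
    refine ⟨fun n => if h : n < ℓ then t ⟨n, h⟩ else false, fun i => ?_⟩
    simp [i.2]
  obtain ⟨y, hyD, hy⟩ := hD.exists_mem_open hopen hne
  exact ⟨y, hyD, funext fun i => hy i⟩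

lemma exists_sep {a : ℕ → Bool} (l : List (ℕ → Bool)) (h : ∀ u ∈ l, u ≠ a) :
    ∃ N, ∀ u ∈ l, ∃ i < N, u i ≠ a i := by
  induction l with
  | nil => exact ⟨0, by simp⟩
  | cons u l ih =>
    obtain ⟨N, hN⟩ := ih fun v hv => h v (List.mem_cons_of_mem _ hv)
    obtain ⟨i, hi⟩ := Function.ne_iff.mp (h u (List.mem_cons_self))
    refine ⟨max (i+1) N, fun v hv => ?_⟩
    rcases List.mem_cons.mp hv with rfl | hv
    · exact ⟨i, by omega, hi⟩
    · obtain ⟨j, hj1, hj2⟩ := hN v hv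
      exact ⟨j, by omega, hj2⟩

/-- Add a new pair (a, b) where b is found by density of D₁. -/
lemma exists_addA (hd₁ : Dense D₁) (S : St) (hS : Inv D₀ D₁ S) (a : ℕ → Bool) (ha : a ∈ D₀)
    (hfree : ∀ q ∈ S.ps, res S.len q.1 ≠ res S.len a) :
    ∃ T : St, Inv D₀ D₁ T ∧ Compat S T ∧ T.len = S.len ∧
      (∀ q ∈ S.ps, q ∈ T.ps) ∧ (∃ q ∈ T.ps, q.1 = a) := by
  obtain ⟨b, hbD, hb⟩ := exists_mem_res hd₁ (S.perm (res S.len a))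
  refine ⟨⟨S.len, S.perm, (a, b) :: S.ps⟩, ⟨?_, ?_⟩, ⟨le_rfl, fun s i => rfl⟩, rfl,
    fun q hq => List.mem_cons_of_mem _ hq, ⟨(a, b), List.mem_cons_self, rfl⟩⟩
  · intro q hq
    rcases List.mem_cons.mp hq with rfl | hq
    · exact ⟨ha, hbD, hb.symm ▸ rfl⟩
    · exact hS.1 q hq
  · intro q hq q' hq' h
    rcases List.mem_cons.mp hq with rfl | hq <;> rcases List.mem_cons.mp hq' with rfl | hq'
    · rfl
    · exact absurd h.symm (hfree q' hq')
    · exact absurd h (hfree q hq)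
    · exact hS.2 q hq q' hq' h

/-- Add a new pair (a, b) where a is found by density of D₀. -/
lemma exists_addB (hd₀ : Dense D₀) (S : St) (hS : Inv D₀ D₁ S) (b : ℕ → Bool) (hb : b ∈ D₁)
    (hfree : ∀ q ∈ S.ps, res S.len q.2 ≠ res S.len b) :
    ∃ T : St, Inv D₀ D₁ T ∧ Compat S T ∧ T.len = S.len ∧
      (∀ q ∈ S.ps, q ∈ T.ps) ∧ (∃ q ∈ T.ps, q.2 = b) := by
  obtain ⟨a, haD, ha⟩ := exists_mem_res hd₀ (S.perm.symm (res S.len b))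
  have hab : S.perm (res S.len a) = res S.len b := by rw [ha, Equiv.apply_symm_apply]
  refine ⟨⟨S.len, S.perm, (a, b) :: S.ps⟩, ⟨?_, ?_⟩, ⟨le_rfl, fun s i => rfl⟩, rfl,
    fun q hq => List.mem_cons_of_mem _ hq, ⟨(a, b), List.mem_cons_self, rfl⟩⟩
  · intro q hq
    rcases List.mem_cons.mp hq with rfl | hq
    · exact ⟨haD, hb, hab⟩
    · exact hS.1 q hq
  · intro q hq q' hq' h
    rcases List.mem_cons.mp hq with rfl | hq <;> rcases List.mem_cons.mp hq' with rfl | hq'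
    · rfl
    · exfalso
      apply hfree q' hq'
      rw [← (hS.1 q' hq').2.2, ← h, hab]
    · exfalso
      apply hfree q hq
      rw [← (hS.1 q hq).2.2, h, hab]
    · exact hS.2 q hq q' hq' h

/-- Ensure the point `a` is tracked on the left, via refining + adding. -/
lemma exists_trackA (hd₁ : Dense D₁) (S : St) (hS : Inv D₀ D₁ S) (a : ℕ → Bool) (ha : a ∈ D₀) :
    ∃ T : St, Inv D₀ D₁ T ∧ Compat S T ∧ S.len ≤ T.len ∧
      (∀ q ∈ S.ps, q ∈ T.ps) ∧ (∃ q ∈ T.ps, q.1 = a) := by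
  by_cases htr : ∃ q ∈ S.ps, q.1 = a
  · exact ⟨S, hS, compat_refl S, le_rfl, fun q hq => hq, htr⟩
  push_neg at htr
  obtain ⟨N, hN⟩ := exists_sep (S.ps.map Prod.fst) (by
    intro u hu
    obtain ⟨q, hq, rfl⟩ := List.mem_map.mp hu
    exact htr q hq)
  set S' := refineN S N with hS'
  have hlen : S'.len = S.len + N := refineN_len S N
  have hps : S'.ps = S.ps := refineN_ps S N
  have hfree : ∀ q ∈ S'.ps, res S'.len q.1 ≠ res S'.len a := by
    intro q hq h
    rw [hps] at hq
    obtain ⟨i, hi, hne⟩ := hN q.1 (List.mem_map.mpr ⟨q, hq, rfl⟩)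
    exact hne (congrFun h ⟨i, by omega⟩)
  obtain ⟨T, hT, hcomp, hTlen, hTps, hTtr⟩ :=
    exists_addA hd₁ S' (inv_refineN S hS N) a ha hfree
  exact ⟨T, hT, compat_trans (compat_refineN S N) hcomp, by omega,
    fun q hq => hTps q (hps ▸ hq), hTtr⟩

/-- Ensure the point `b` is tracked on the right. -/
lemma exists_trackB (hd₀ : Dense D₀) (S : St) (hS : Inv D₀ D₁ S) (b : ℕ → Bool) (hb : b ∈ D₁) :
    ∃ T : St, Inv D₀ D₁ T ∧ Compat S T ∧ S.len ≤ T.len ∧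
      (∀ q ∈ S.ps, q ∈ T.ps) ∧ (∃ q ∈ T.ps, q.2 = b) := by
  by_cases htr : ∃ q ∈ S.ps, q.2 = b
  · exact ⟨S, hS, compat_refl S, le_rfl, fun q hq => hq, htr⟩
  push_neg at htr
  obtain ⟨N, hN⟩ := exists_sep (S.ps.map Prod.snd) (by
    intro u hu
    obtain ⟨q, hq, rfl⟩ := List.mem_map.mp hu
    exact htr q hq)
  set S' := refineN S N with hS'
  have hlen : S'.len = S.len + N := refineN_len S N
  have hps : S'.ps = S.ps := refineN_ps S N
  have hfree : ∀ q ∈ S'.ps, res S'.len q.2 ≠ res S'.len b := by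
    intro q hq h
    rw [hps] at hq
    obtain ⟨i, hi, hne⟩ := hN q.2 (List.mem_map.mpr ⟨q, hq, rfl⟩)
    exact hne (congrFun h ⟨i, by omega⟩)
  obtain ⟨T, hT, hcomp, hTlen, hTps, hTtr⟩ :=
    exists_addB hd₀ S' (inv_refineN S hS N) b hb hfree
  exact ⟨T, hT, compat_trans (compat_refineN S N) hcomp, by omega,
    fun q hq => hTps q (hps ▸ hq), hTtr⟩

/-- One full step of the construction. -/
lemma step_exists (hd₀ : Dense D₀) (hd₁ : Dense D₁) (S : St) (hS : Inv D₀ D₁ S)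
    (a b : ℕ → Bool) (ha : a ∈ D₀) (hb : b ∈ D₁) :
    ∃ T : St, Inv D₀ D₁ T ∧ Compat S T ∧ S.len < T.len ∧
      (∀ q ∈ S.ps, q ∈ T.ps) ∧ (∃ q ∈ T.ps, q.1 = a) ∧ (∃ q ∈ T.ps, q.2 = b) := by
  obtain ⟨T₁, h1, c1, l1, p1, t1⟩ := exists_trackA hd₁ (refine S) (inv_refine S hS) a ha
  obtain ⟨T₂, h2, c2, l2, p2, t2⟩ := exists_trackB hd₀ T₁ h1 b hb
  refine ⟨T₂, h2, compat_trans (compat_refine S) (compat_trans c1 c2), ?_, ?_, ?_, t2⟩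
  · have : (refine S).len = S.len + 1 := rfl
    omega
  · exact fun q hq => p2 q (p1 q hq)
  · obtain ⟨q, hq, hq1⟩ := t1
    exact ⟨q, p2 q hq, hq1⟩

section Seq

variable (hd₀ : Dense D₀) (hd₁ : Dense D₁) (f₀ f₁ : ℕ → ℕ → Bool)
  (hf₀ : ∀ n, f₀ n ∈ D₀) (hf₁ : ∀ n, f₁ n ∈ D₁)

/-- The sequence of stages. -/
noncomputable def seq : ℕ → {S : St // Inv D₀ D₁ S}
  | 0 => ⟨⟨0, Equiv.refl _, []⟩, ⟨by simp, by simp⟩⟩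
  | n+1 =>
    ⟨(step_exists hd₀ hd₁ (seq n).1 (seq n).2 (f₀ n) (f₁ n) (hf₀ n) (hf₁ n)).choose,
     (step_exists hd₀ hd₁ (seq n).1 (seq n).2 (f₀ n) (f₁ n) (hf₀ n) (hf₁ n)).choose_spec.1⟩

lemma seq_spec (n : ℕ) :
    Compat (seq hd₀ hd₁ f₀ f₁ hf₀ hf₁ n).1 (seq hd₀ hd₁ f₀ f₁ hf₀ hf₁ (n+1)).1 ∧
    (seq hd₀ hd₁ f₀ f₁ hf₀ hf₁ n).1.len < (seq hd₀ hd₁ f₀ f₁ hf₀ hf₁ (n+1)).1.len ∧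
    (∀ q ∈ (seq hd₀ hd₁ f₀ f₁ hf₀ hf₁ n).1.ps, q ∈ (seq hd₀ hd₁ f₀ f₁ hf₀ hf₁ (n+1)).1.ps) ∧
    (∃ q ∈ (seq hd₀ hd₁ f₀ f₁ hf₀ hf₁ (n+1)).1.ps, q.1 = f₀ n) ∧
    (∃ q ∈ (seq hd₀ hd₁ f₀ f₁ hf₀ hf₁ (n+1)).1.ps, q.2 = f₁ n) :=
  (step_exists hd₀ hd₁ (seq hd₀ hd₁ f₀ f₁ hf₀ hf₁ n).1 (seq hd₀ hd₁ f₀ f₁ hf₀ hf₁ n).2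
    (f₀ n) (f₁ n) (hf₀ n) (hf₁ n)).choose_spec.2

end Seq


section Final

/-- Coherence of the permutations along a compatible chain. -/
lemma coherence (S : ℕ → St) (hcomp : ∀ m n, m ≤ n → Compat (S m) (S n))
    {m n : ℕ} (h : m ≤ n) (x : ℕ → Bool) (i : ℕ)
    (him : i < (S m).len) (hin : i < (S n).len) :
    (S n).perm (res (S n).len x) ⟨i, hin⟩ = (S m).perm (res (S m).len x) ⟨i, him⟩ := by
  obtain ⟨hle, hc⟩ := hcomp m n h
  have h1 : (⟨i, hin⟩ : Fin (S n).len) = Fin.castLE hle ⟨i, him⟩ := rfl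
  have h2 : (fun j : Fin (S m).len => res (S n).len x (Fin.castLE hle j))
      = res (S m).len x := rfl
  rw [h1, hc (res (S n).len x) ⟨i, him⟩, h2]

/-- Coherence for the inverse permutations. -/
lemma coherence_symm (S : ℕ → St) (hcomp : ∀ m n, m ≤ n → Compat (S m) (S n))
    {m n : ℕ} (h : m ≤ n) (y : ℕ → Bool) (i : ℕ)
    (him : i < (S m).len) (hin : i < (S n).len) :
    (S n).perm.symm (res (S n).len y) ⟨i, hin⟩ = (S m).perm.symm (res (S m).len y) ⟨i, him⟩ := by
  obtain ⟨hle, hc⟩ := hcomp m n h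
  set t := res (S n).len y with ht
  have key : (fun j : Fin (S m).len => (S n).perm.symm t (Fin.castLE hle j))
      = (S m).perm.symm (fun j => t (Fin.castLE hle j)) := by
    apply (S m).perm.injective
    funext i'
    have := hc ((S n).perm.symm t) i'
    rw [Equiv.apply_symm_apply] at this
    rw [← this, Equiv.apply_symm_apply]
  have h1 : (⟨i, hin⟩ : Fin (S n).len) = Fin.castLE hle ⟨i, him⟩ := rfl
  have h2 : (fun j : Fin (S m).len => t (Fin.castLE hle j)) = res (S m).len y := rfl
  rw [h1]
  have := congrFun key ⟨i, him⟩
  rw [this, h2]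

/-- The limit forward map. -/
noncomputable def hFun (S : ℕ → St) (hlen : ∀ n, n < (S (n+1)).len) (x : ℕ → Bool) (n : ℕ) :
    Bool :=
  (S (n+1)).perm (res (S (n+1)).len x) ⟨n, hlen n⟩

/-- The limit backward map. -/
noncomputable def gFun (S : ℕ → St) (hlen : ∀ n, n < (S (n+1)).len) (y : ℕ → Bool) (n : ℕ) :
    Bool :=
  (S (n+1)).perm.symm (res (S (n+1)).len y) ⟨n, hlen n⟩

lemma hFun_res (S : ℕ → St) (hlen : ∀ n, n < (S (n+1)).len)
    (hcomp : ∀ m n, m ≤ n → Compat (S m) (S n)) (x : ℕ → Bool) (m : ℕ) :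
    res (S m).len (hFun S hlen x) = (S m).perm (res (S m).len x) := by
  funext i
  show hFun S hlen x i = _
  rw [hFun]
  rcases le_total (i.val + 1) m with h | h
  · rw [← coherence S hcomp h x i.val (hlen i.val) i.2]
  · rw [coherence S hcomp h x i.val i.2 (hlen i.val)]

lemma gFun_res (S : ℕ → St) (hlen : ∀ n, n < (S (n+1)).len)
    (hcomp : ∀ m n, m ≤ n → Compat (S m) (S n)) (y : ℕ → Bool) (m : ℕ) :
    res (S m).len (gFun S hlen y) = (S m).perm.symm (res (S m).len y) := by
  funext i
  show gFun S hlen y i = _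
  rw [gFun]
  rcases le_total (i.val + 1) m with h | h
  · rw [← coherence_symm S hcomp h y i.val (hlen i.val) i.2]
  · rw [coherence_symm S hcomp h y i.val i.2 (hlen i.val)]

lemma gFun_hFun (S : ℕ → St) (hlen : ∀ n, n < (S (n+1)).len)
    (hcomp : ∀ m n, m ≤ n → Compat (S m) (S n)) (x : ℕ → Bool) :
    gFun S hlen (hFun S hlen x) = x := by
  funext n
  rw [gFun, hFun_res S hlen hcomp x (n+1), Equiv.symm_apply_apply]
  rfl

lemma hFun_gFun (S : ℕ → St) (hlen : ∀ n, n < (S (n+1)).len)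
    (hcomp : ∀ m n, m ≤ n → Compat (S m) (S n)) (y : ℕ → Bool) :
    hFun S hlen (gFun S hlen y) = y := by
  funext n
  rw [hFun, gFun_res S hlen hcomp y (n+1), Equiv.apply_symm_apply]
  rfl

lemma continuous_res (ℓ : ℕ) : Continuous (res ℓ) :=
  continuous_pi fun i => continuous_apply (i : ℕ)

lemma continuous_hFun (S : ℕ → St) (hlen : ∀ n, n < (S (n+1)).len) :
    Continuous (hFun S hlen) := by
  refine continuous_pi fun n => ?_
  have : (fun x => hFun S hlen x n)
      = (fun v : Fin (S (n+1)).len → Bool => (S (n+1)).perm v ⟨n, hlen n⟩)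
        ∘ res (S (n+1)).len := rfl
  rw [this]
  exact Continuous.comp continuous_of_discreteTopology (continuous_res _)

lemma continuous_gFun (S : ℕ → St) (hlen : ∀ n, n < (S (n+1)).len) :
    Continuous (gFun S hlen) := by
  refine continuous_pi fun n => ?_
  have : (fun y => gFun S hlen y n)
      = (fun v : Fin (S (n+1)).len → Bool => (S (n+1)).perm.symm v ⟨n, hlen n⟩)
        ∘ res (S (n+1)).len := rfl
  rw [this]
  exact Continuous.comp continuous_of_discreteTopology (continuous_res _)

/-- Lengths grow at least linearly. -/
lemma len_ge (S : ℕ → St) (hlt : ∀ n, (S n).len < (S (n+1)).len) (n : ℕ) : n ≤ (S n).len := by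
  induction n with
  | zero => omega
  | succ n ih => have := hlt n; omega

/-- A tracked pair is mapped correctly by the limit map. -/
lemma hFun_tracked (S : ℕ → St) (hlen : ∀ n, n < (S (n+1)).len)
    (hlt : ∀ n, (S n).len < (S (n+1)).len)
    (hcomp : ∀ m n, m ≤ n → Compat (S m) (S n))
    (hinv : ∀ n, Inv D₀ D₁ (S n))
    (hps : ∀ m n, m ≤ n → ∀ q ∈ (S m).ps, q ∈ (S n).ps)
    {k : ℕ} {q : (ℕ → Bool) × (ℕ → Bool)} (hq : q ∈ (S k).ps) :
    hFun S hlen q.1 = q.2 := by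
  funext n
  rw [hFun]
  set m := max (n+1) k with hm
  have hq' : q ∈ (S m).ps := hps k m (le_max_right _ _) q hq
  have hbound : n < (S m).len := by
    have h1 : n + 1 ≤ m := le_max_left _ _
    have h2 : m ≤ (S m).len := len_ge S hlt m
    omega
  rw [← coherence S hcomp (le_max_left (n+1) k) q.1 n (hlen n) hbound,
    ((hinv m).1 q hq').2.2]
  rfl

end Final

end CDH

theorem cantor_countable_dense_homogeneous (D₀ D₁ : Set (ℕ → Bool))
    (hD₀c : D₀.Countable) (hD₁c : D₁.Countable) (hD₀d : Dense D₀) (hD₁d : Dense D₁) :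
    ∃ h : (ℕ → Bool) ≃ₜ (ℕ → Bool), h '' D₀ = D₁ := by
  obtain ⟨f₀, hf₀r⟩ := hD₀c.exists_eq_range hD₀d.nonempty
  obtain ⟨f₁, hf₁r⟩ := hD₁c.exists_eq_range hD₁d.nonempty
  have hf₀ : ∀ n, f₀ n ∈ D₀ := fun n => hf₀r ▸ mem_range_self n
  have hf₁ : ∀ n, f₁ n ∈ D₁ := fun n => hf₁r ▸ mem_range_self n
  set S : ℕ → CDH.St := fun n => (CDH.seq hD₀d hD₁d f₀ f₁ hf₀ hf₁ n).1 with hS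
  have hinv : ∀ n, CDH.Inv D₀ D₁ (S n) := fun n => (CDH.seq hD₀d hD₁d f₀ f₁ hf₀ hf₁ n).2
  have hspec := fun n => CDH.seq_spec hD₀d hD₁d f₀ f₁ hf₀ hf₁ n
  have hlt : ∀ n, (S n).len < (S (n+1)).len := fun n => (hspec n).2.1
  have hlen : ∀ n, n < (S (n+1)).len := fun n => CDH.len_ge S hlt (n+1)
  have hcomp : ∀ m n, m ≤ n → CDH.Compat (S m) (S n) := by
    intro m n h
    induction n, h using Nat.le_induction with
    | base => exact CDH.compat_refl _
    | succ n hmn ih => exact CDH.compat_trans ih (hspec n).1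
  have hps : ∀ m n, m ≤ n → ∀ q ∈ (S m).ps, q ∈ (S n).ps := by
    intro m n h
    induction n, h using Nat.le_induction with
    | base => exact fun q hq => hq
    | succ n hmn ih => exact fun q hq => (hspec n).2.2.1 q (ih q hq)
  refine ⟨{ toFun := CDH.hFun S hlen
            invFun := CDH.gFun S hlen
            left_inv := CDH.gFun_hFun S hlen hcomp
            right_inv := CDH.hFun_gFun S hlen hcomp
            continuous_toFun := CDH.continuous_hFun S hlen
            continuous_invFun := CDH.continuous_gFun S hlen }, ?_⟩
  apply Set.eq_of_subset_of_subset
  · rintro _ ⟨a, ha, rfl⟩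
    have : a ∈ range f₀ := hf₀r ▸ ha
    obtain ⟨k, rfl⟩ := this
    obtain ⟨q, hq, hq1⟩ := (hspec k).2.2.2.1
    have := CDH.hFun_tracked S hlen hlt hcomp hinv hps hq
    show CDH.hFun S hlen (f₀ k) ∈ D₁
    rw [← hq1, this]
    exact ((hinv (k+1)).1 q hq).2.1
  · intro b hb
    have : b ∈ range f₁ := hf₁r ▸ hb
    obtain ⟨k, rfl⟩ := this
    obtain ⟨q, hq, hq2⟩ := (hspec k).2.2.2.2
    refine ⟨q.1, ((hinv (k+1)).1 q hq).1, ?_⟩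
    show CDH.hFun S hlen q.1 = f₁ k
    rw [CDH.hFun_tracked S hlen hlt hcomp hinv hps hq, hq2]
end
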